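/- For every even integer m ≥ 2 define P_m = (1/4)·(3 − 1/m + binom(m, m/2)/2^m). Then P_8 = 403/512, and for every even integer m ≥ 2 one has P_m ≤ 403/512, with equality if and only if m = 8. -/

import Mathlib

/-- The average success probability of the Bell-state discrimination scheme with
`4(m−1)` ancillary single photons, `P_m = (1/4)(3 − 1/m + C(m, m/2)/2^m)`. -/
def bellSuccessProb (m : ℕ) : ℚ :=
  (1 / 4 : ℚ) * (3 - 1 / (m : ℚ) + (m.choose (m / 2) : ℚ) / 2 ^ m)

/-- `f k = C(2k,k)/4^k - 1/(2k)`, so that `P_{2k} = 3/4 + f k / 4`. -/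
def fAux (k : ℕ) : ℚ := (Nat.centralBinom k : ℚ) / 4 ^ k - 1 / (2 * k)

lemma cb_lower : ∀ k, 4 ≤ k → 4 ^ k < k * Nat.centralBinom k := by
  intro k hk
  induction k with
  | zero => omega
  | succ n ih =>
    rcases Nat.lt_or_ge n 4 with h | h
    · have hn : n = 3 := by omega
      subst hn
      decide
    · have ih' := ih h
      have key : (n + 1) * Nat.centralBinom (n + 1)
          = 2 * (2 * n + 1) * Nat.centralBinom n := Nat.succ_mul_centralBinom_succ n
      have h4 : 4 ^ (n + 1) = 4 * 4 ^ n := by ring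
      have : 4 * 4 ^ n < 4 * (n * Nat.centralBinom n) := by omega
      have h5 : 4 * (n * Nat.centralBinom n) ≤ 2 * (2 * n + 1) * Nat.centralBinom n := by
        nlinarith [Nat.centralBinom_pos n]
      omega

lemma f_step (k : ℕ) (hk : 4 ≤ k) : fAux (k + 1) < fAux k := by
  have hk0 : (0 : ℚ) < k := by exact_mod_cast Nat.lt_of_lt_of_le (by norm_num) hk
  have hx : (0 : ℚ) < 4 ^ k := by positivity
  have h1 : ((k : ℚ) + 1) * (Nat.centralBinom (k + 1) : ℚ)
      = 2 * (2 * k + 1) * Nat.centralBinom k := by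
    exact_mod_cast congrArg (Nat.cast (R := ℚ)) (Nat.succ_mul_centralBinom_succ k)
  have h2 : (4 : ℚ) ^ k < k * Nat.centralBinom k := by exact_mod_cast cb_lower k hk
  have hk1 : ((k : ℚ) + 1) ≠ 0 := by positivity
  have hD : (Nat.centralBinom (k + 1) : ℚ)
      = 2 * (2 * k + 1) * Nat.centralBinom k / ((k : ℚ) + 1) := by
    rw [eq_div_iff hk1]; linarith [h1]
  have hkey : fAux k - fAux (k + 1)
      = ((k : ℚ) * Nat.centralBinom k - 4 ^ k) / (2 * k * (k + 1) * 4 ^ k) := by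
    unfold fAux
    rw [hD]
    field_simp
    push_cast
    ring
  have hpos : (0 : ℚ) < ((k : ℚ) * Nat.centralBinom k - 4 ^ k) / (2 * k * (k + 1) * 4 ^ k) := by
    apply div_pos (by linarith) (by positivity)
  linarith [hkey ▸ hpos]

lemma f_small : ∀ k, 5 ≤ k → fAux k < 19 / 128 := by
  intro k hk
  induction k with
  | zero => omega
  | succ n ih =>
    rcases Nat.lt_or_ge n 5 with h | h
    · have hn : n = 4 := by omega
      subst hn
      unfold fAux
      norm_num [Nat.centralBinom, show Nat.choose 10 5 = 252 from rfl]
    · exact lt_trans (f_step n (by omega)) (ih h)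

lemma bsp_eq (k : ℕ) : bellSuccessProb (2 * k) = 3 / 4 + fAux k / 4 := by
  unfold bellSuccessProb fAux
  have h1 : (2 * k) / 2 = k := by omega
  have h2 : ((2 : ℚ)) ^ (2 * k) = 4 ^ k := by
    rw [pow_mul]; norm_num
  rw [h1, h2]
  rw [Nat.centralBinom]
  push_cast
  ring

/-- `P_8 = 403/512`, and for every even `m ≥ 2` one has
`P_m ≤ 403/512`, with equality iff `m = 8`. -/
theorem bell_success_prob_max :
    bellSuccessProb 8 = 403 / 512 ∧
    ∀ m : ℕ, 2 ≤ m → Even m →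
      (bellSuccessProb m ≤ 403 / 512 ∧ (bellSuccessProb m = 403 / 512 ↔ m = 8)) := by
  have h8 : bellSuccessProb 8 = 403 / 512 := by
    unfold bellSuccessProb
    norm_num [show Nat.choose 8 4 = 70 from rfl]
  refine ⟨h8, ?_⟩
  intro m hm hev
  obtain ⟨k, hk⟩ := hev
  have hm2 : m = 2 * k := by omega
  subst hm2
  rw [bsp_eq]
  rcases Nat.lt_or_ge k 5 with h | h
  · interval_cases k
    · omega
    · norm_num [fAux, Nat.centralBinom, show Nat.choose 2 1 = 2 from rfl]
    · norm_num [fAux, Nat.centralBinom, show Nat.choose 4 2 = 6 from rfl]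
    · norm_num [fAux, Nat.centralBinom, show Nat.choose 6 3 = 20 from rfl]
    · norm_num [fAux, Nat.centralBinom, show Nat.choose 8 4 = 70 from rfl]
  · have hf := f_small k h
    constructor
    · linarith
    · constructor
      · intro heq; exfalso; linarith
      · intro heq; omega
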